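/- Let X be a real Banach space in which every closed bounded convex subset is the closed convex hull of its extreme points (e.g., X has the Radon–Nikodým property). Then the set A = { x ∈ X : x = Σ_{i=1}^n λ_i x_i with λ_i > 0, x_i extreme points of B_X, and ‖x‖ = Σ_{i=1}^n λ_i } is dense in X. -/

import Mathlib

open scoped BigOperators

open Set

/-- Auxiliary: a positive multiple of a norm-one convex combination of extreme points of the
unit ball lies in the set `A`. -/
lemma aux_mem (X : Type*) [NormedAddCommGroup X] [NormedSpace ℝ X]
    {r : ℝ} (hr : 0 < r) {z : X} (hz1 : ‖z‖ = 1)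
    {ι : Type} [Fintype ι] (w : ι → ℝ) (p : ι → X)
    (hw0 : ∀ i, 0 ≤ w i) (hw1 : ∑ i, w i = 1)
    (hp : ∀ i, p i ∈ (Metric.closedBall (0 : X) 1).extremePoints ℝ)
    (hzp : ∑ i, w i • p i = z) :
    r • z ∈ {x : X | ∃ (n : ℕ) (lam : Fin n → ℝ) (e : Fin n → X),
      (∀ i, 0 < lam i) ∧
      (∀ i, e i ∈ (Metric.closedBall (0 : X) 1).extremePoints ℝ) ∧
      x = ∑ i, lam i • e i ∧ ‖x‖ = ∑ i, lam i} := by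
  classical
  set t : Finset ι := Finset.univ.filter fun i => 0 < w i with ht
  have hsum_t : ∑ i ∈ t, w i = 1 := by
    rw [← hw1]
    refine Finset.sum_subset (Finset.subset_univ _) ?_
    intro i _ hi
    have := hw0 i
    simp only [ht, Finset.mem_filter, Finset.mem_univ, true_and] at hi
    linarith
  have hvec_t : ∑ i ∈ t, w i • p i = z := by
    rw [← hzp]
    refine Finset.sum_subset (Finset.subset_univ _) ?_
    intro i _ hi
    have := hw0 i
    simp only [ht, Finset.mem_filter, Finset.mem_univ, true_and] at hi
    have : w i = 0 := by linarith
    simp [this]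
  obtain ⟨σ⟩ : Nonempty ((t : Finset ι) ≃ Fin t.card) := ⟨t.equivFin⟩
  refine ⟨t.card, fun j => r * w (σ.symm j), fun j => p (σ.symm j), ?_, ?_, ?_, ?_⟩
  · intro j
    have h := (σ.symm j).2
    simp only [ht, Finset.mem_filter, Finset.mem_univ, true_and] at h
    exact mul_pos hr h
  · intro j; exact hp _
  · have : ∑ j, (r * w (σ.symm j)) • p (σ.symm j) = ∑ i ∈ t, (r * w i) • p i := by
      rw [← Finset.sum_coe_sort t fun i => (r * w i) • p i]
      exact (Equiv.sum_comp σ.symm fun a => (r * w (a : ι)) • p (a : ι))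
    rw [this, ← hvec_t, Finset.smul_sum]
    exact Finset.sum_congr rfl fun i _ => (mul_smul r (w i) (p i)).symm
  · have h1 : ∑ j, r * w (σ.symm j) = ∑ i ∈ t, r * w i := by
      rw [← Finset.sum_coe_sort t fun i => r * w i]
      exact (Equiv.sum_comp σ.symm fun a => r * w (a : ι))
    rw [h1, ← Finset.mul_sum, hsum_t, mul_one, norm_smul, hz1, mul_one,
      Real.norm_eq_abs, abs_of_pos hr]

/-- In a real Banach space in which every closed bounded convex set is the closed convex
hull of its extreme points, the set of points `x = ∑ λᵢ xᵢ` with `λᵢ > 0`,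
`xᵢ` extreme points of the unit ball and `‖x‖ = ∑ λᵢ`, is dense. -/
theorem stmt3 (X : Type*) [NormedAddCommGroup X] [NormedSpace ℝ X] [CompleteSpace X]
    (hKM : ∀ C : Set X, IsClosed C → Bornology.IsBounded C → Convex ℝ C →
      C = closure (convexHull ℝ (C.extremePoints ℝ))) :
    Dense {x : X | ∃ (n : ℕ) (lam : Fin n → ℝ) (e : Fin n → X),
      (∀ i, 0 < lam i) ∧
      (∀ i, e i ∈ (Metric.closedBall (0 : X) 1).extremePoints ℝ) ∧
      x = ∑ i, lam i • e i ∧ ‖x‖ = ∑ i, lam i} := by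
  set A : Set X := {x : X | ∃ (n : ℕ) (lam : Fin n → ℝ) (e : Fin n → X),
      (∀ i, 0 < lam i) ∧
      (∀ i, e i ∈ (Metric.closedBall (0 : X) 1).extremePoints ℝ) ∧
      x = ∑ i, lam i • e i ∧ ‖x‖ = ∑ i, lam i} with hA
  intro x
  rcases eq_or_ne x 0 with rfl | hx
  · -- 0 ∈ A via the empty representation
    have h0 : (0 : X) ∈ A := by
      refine ⟨0, fun i => i.elim0, fun i => i.elim0, fun i => i.elim0, fun i => i.elim0, ?_, ?_⟩
      · simp
      · simp
    exact subset_closure h0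
  · -- x ≠ 0
    obtain ⟨g, hg1, hgx'⟩ := exists_dual_vector ℝ x (norm_ne_zero_iff.mpr hx)
    have hgx : g x = ‖x‖ := by exact_mod_cast hgx'
    have hxpos : (0 : ℝ) < ‖x‖ := norm_pos_iff.mpr hx
    set u : X := ‖x‖⁻¹ • x with hu
    have hgu : g u = 1 := by
      rw [hu, map_smul, smul_eq_mul, hgx, inv_mul_cancel₀ (ne_of_gt hxpos)]
    have hunorm : ‖u‖ = 1 := by
      rw [hu, norm_smul, norm_inv, norm_norm, inv_mul_cancel₀ (ne_of_gt hxpos)]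
    -- the face
    set B : Set X := Metric.closedBall (0 : X) 1 with hB
    set F : Set X := {z ∈ B | ∀ y ∈ B, g y ≤ g z} with hF
    have hgle : ∀ y ∈ B, g y ≤ 1 := by
      intro y hy
      rw [hB, Metric.mem_closedBall, dist_zero_right] at hy
      calc g y ≤ ‖g y‖ := le_abs_self _
        _ ≤ ‖g‖ * ‖y‖ := g.le_opNorm y
        _ ≤ 1 := by rw [hg1, one_mul]; exact hy
    have huB : u ∈ B := by
      rw [hB, Metric.mem_closedBall, dist_zero_right, hunorm]
    have hFeq : F = {z ∈ B | g z = 1} := by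
      ext z
      simp only [hF, mem_setOf_eq, mem_sep_iff]
      constructor
      · rintro ⟨hzB, hmax⟩
        exact ⟨hzB, le_antisymm (hgle z hzB) (hgu ▸ hmax u huB)⟩
      · rintro ⟨hzB, hz1⟩
        exact ⟨hzB, fun y hy => hz1 ▸ hgle y hy⟩
    have huF : u ∈ F := by
      rw [hFeq]; exact ⟨huB, hgu⟩
    -- F is exposed hence extreme in B
    have hexp : IsExposed ℝ B F := fun _ => ⟨g, rfl⟩
    have hext : IsExtreme ℝ B F := hexp.isExtreme
    -- F is closed bounded convex
    have hFB : F ⊆ B := fun z hz => hz.1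
    have hFclosed : IsClosed F := by
      rw [hFeq]
      exact Metric.isClosed_closedBall.inter (isClosed_eq g.continuous continuous_const)
    have hFbdd : Bornology.IsBounded F :=
      (Metric.isBounded_closedBall).subset hFB
    have hFconv : Convex ℝ F := by
      rw [hFeq]
      exact (convex_closedBall _ _).inter (convex_hyperplane g.toLinearMap.isLinear 1)
    have hKMF := hKM F hFclosed hFbdd hFconv
    have huclos : u ∈ closure (convexHull ℝ (F.extremePoints ℝ)) := hKMF ▸ huF
    -- conclude via metric closure
    rw [Metric.mem_closure_iff]
    intro ε hε
    rw [Metric.mem_closure_iff] at huclos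
    obtain ⟨z, hz, hdz⟩ := huclos (ε / ‖x‖) (div_pos hε hxpos)
    -- z ∈ F since conv hull of subset of convex F
    have hzF : z ∈ F := by
      have : convexHull ℝ (F.extremePoints ℝ) ⊆ F :=
        convexHull_min extremePoints_subset hFconv
      exact this hz
    have hz1 : ‖z‖ = 1 := by
      have hle : ‖z‖ ≤ 1 := by
        have := hFB hzF
        rwa [hB, Metric.mem_closedBall, dist_zero_right] at this
      have hzg : g z = 1 := (hFeq ▸ hzF).2
      have hge : (1 : ℝ) ≤ ‖z‖ := by
        calc (1 : ℝ) = g z := hzg.symm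
          _ ≤ ‖g z‖ := le_abs_self _
          _ ≤ ‖g‖ * ‖z‖ := g.le_opNorm z
          _ = ‖z‖ := by rw [hg1, one_mul]
      linarith
    -- get the finite representation
    rw [mem_convexHull_iff_exists_fintype] at hz
    obtain ⟨ι, _, w, p, hw0, hw1, hp, hzp⟩ := hz
    have hpext : ∀ i, p i ∈ (Metric.closedBall (0 : X) 1).extremePoints ℝ := fun i =>
      hext.extremePoints_subset_extremePoints (hp i)
    have hmem : ‖x‖ • z ∈ A := aux_mem X hxpos hz1 w p hw0 hw1 hpext hzp
    refine ⟨‖x‖ • z, hmem, ?_⟩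
    have hxu : x = ‖x‖ • u := by
      rw [hu, smul_smul, mul_inv_cancel₀ (ne_of_gt hxpos), one_smul]
    calc dist x (‖x‖ • z) = dist (‖x‖ • u) (‖x‖ • z) := by rw [← hxu]
      _ = ‖x‖ * dist u z := by
          rw [dist_eq_norm, dist_eq_norm, ← smul_sub, norm_smul, norm_norm]
      _ < ‖x‖ * (ε / ‖x‖) := by
          exact mul_lt_mul_of_pos_left hdz hxpos
      _ = ε := by field_simp
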